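/- Let N ≥ 1 be an integer, let p satisfy 1 + 8/N < p, and additionally p < 1 + 8/(N-4) when N ≥ 5, and set s_c = N/2 - 4/(p-1). If Q : ℝ^N → ℝ is a Schwartz function solving Δ²Q + (2 - s_c)Q - |Q|^{p-1}Q = 0 on ℝ^N, then the following three identities hold: ∫|ΔQ|² dx = (N(p-1)/(4(p+1))) ∫|Q|^{p+1} dx, ∫|Q|² dx = ((p-1)/(2(p+1))) ∫|Q|^{p+1} dx, and E(Q) = ((N(p-1)-8)/(8(p+1))) ∫|Q|^{p+1} dx. -/

import Mathlib

open MeasureTheory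

noncomputable section

/-- The Laplacian `Δu = ∑ j ∂²u/∂x_j²` of a function on `ℝ^N`. -/
def laplacian {N : ℕ} {F : Type*} [NormedAddCommGroup F] [NormedSpace ℝ F]
    (u : EuclideanSpace ℝ (Fin N) → F) (x : EuclideanSpace ℝ (Fin N)) : F :=
  ∑ j : Fin N,
    fderiv ℝ (fun y => fderiv ℝ u y (EuclideanSpace.single j 1)) x (EuclideanSpace.single j 1)

namespace GSI

open SchwartzMap

variable {N : ℕ}

local notation "𝓢N" => SchwartzMap (EuclideanSpace ℝ (Fin N)) ℝ

lemma sum_apply' (s : Finset (Fin N)) (g : Fin N → 𝓢N) (x : EuclideanSpace ℝ (Fin N)) :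
    (∑ j ∈ s, g j) x = ∑ j ∈ s, g j x := by
  induction s using Finset.cons_induction with
  | empty => rfl
  | cons a s ha ih => rw [Finset.sum_cons, Finset.sum_cons, SchwartzMap.add_apply, ih]

/-- Directional derivative operator on Schwartz maps. -/
def D (j : Fin N) : 𝓢N →L[ℝ] 𝓢N := SchwartzMap.evalCLM ℝ _ ℝ (EuclideanSpace.single j 1) ∘L SchwartzMap.fderivCLM ℝ _ ℝ

lemma D_apply (j : Fin N) (f : 𝓢N) (x) :
    D j f x = fderiv ℝ f x (EuclideanSpace.single j 1) := rfl

lemma D_coe (j : Fin N) (f : 𝓢N) :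
    ⇑(D j f) = fun x => fderiv ℝ f x (EuclideanSpace.single j 1) := rfl

/-- Laplacian as a Schwartz map. -/
def lapS (f : 𝓢N) : 𝓢N := ∑ j, D j (D j f)

lemma lapS_coe (f : 𝓢N) : ⇑(lapS f) = laplacian (⇑f) := by
  funext x
  rw [lapS, sum_apply']
  rfl

lemma abs_coord_le (x : EuclideanSpace ℝ (Fin N)) (j : Fin N) : |x j| ≤ ‖x‖ := by
  rw [EuclideanSpace.norm_eq]
  calc |x j| = Real.sqrt (‖x j‖^2) := by
        rw [Real.sqrt_sq_eq_abs, Real.norm_eq_abs, abs_abs]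
  _ ≤ _ := by
      apply Real.sqrt_le_sqrt
      exact Finset.single_le_sum (f := fun i => ‖x i‖^2) (fun i _ => by positivity)
        (Finset.mem_univ j)

/-- Master integrability lemma. -/
lemma integrable_master (u v : 𝓢N) (c : ℝ) (w : EuclideanSpace ℝ (Fin N) → ℝ)
    (hw : AEStronglyMeasurable w volume)
    (hbound : ∀ x, |w x| ≤ c * ((1 + ‖x‖) * (‖u x‖ * ‖v x‖))) :
    Integrable w := by
  set Cv := (SchwartzMap.seminorm ℝ 0 0) v with hCvdef
  have hCv : ∀ x, ‖v x‖ ≤ Cv := fun x => SchwartzMap.norm_le_seminorm ℝ v x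
  have h0 := u.integrable_pow_mul (volume) 0
  have h1 := u.integrable_pow_mul (volume) 1
  have hi : Integrable (fun x : EuclideanSpace ℝ (Fin N) =>
      (|c| * Cv) * (‖x‖^0 * ‖u x‖ + ‖x‖^1 * ‖u x‖)) := (h0.add h1).const_mul _
  apply hi.mono' hw
  filter_upwards with x
  have h2 := hbound x
  have h3 : ‖v x‖ ≤ Cv := hCv x
  have h4 : (0:ℝ) ≤ ‖v x‖ := norm_nonneg _
  have h5 : (0:ℝ) ≤ ‖u x‖ := norm_nonneg _
  have h6 : (0:ℝ) ≤ ‖x‖ := norm_nonneg _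
  have h7 : c ≤ |c| := le_abs_self c
  have h8 : (0:ℝ) ≤ |c| := abs_nonneg c
  rw [Real.norm_eq_abs]
  have hX : (0:ℝ) ≤ (1 + ‖x‖) * (‖u x‖ * ‖v x‖) := by positivity
  calc |w x| ≤ c * ((1 + ‖x‖) * (‖u x‖ * ‖v x‖)) := h2
  _ ≤ |c| * ((1 + ‖x‖) * (‖u x‖ * ‖v x‖)) := by nlinarith
  _ ≤ (|c| * Cv) * (‖x‖^0 * ‖u x‖ + ‖x‖^1 * ‖u x‖) := by
      have : (1 + ‖x‖) * (‖u x‖ * ‖v x‖) ≤ Cv * (‖x‖^0 * ‖u x‖ + ‖x‖^1 * ‖u x‖) := by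
        simp only [pow_zero, pow_one, one_mul]
        nlinarith [mul_nonneg (mul_nonneg (by linarith : (0:ℝ) ≤ 1 + ‖x‖) h5) (sub_nonneg.2 h3)]
      nlinarith

lemma cont_D (j : Fin N) (f : 𝓢N) : Continuous ⇑(D j f) := (D j f).continuous

/-- Integrability of a product of two Schwartz maps with a coordinate weight. -/
lemma integrable_coord_mul (u v : 𝓢N) (j : Fin N) :
    Integrable (fun x => x j * u x * v x) := by
  apply integrable_master u v 1
  · exact (((ContinuousLinearMap.continuous (EuclideanSpace.proj (𝕜 := ℝ) j)).mul
      u.continuous).mul v.continuous).aestronglyMeasurable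
  · intro x
    have := abs_coord_le x j
    have h5 : (0:ℝ) ≤ ‖u x‖ := norm_nonneg _
    have h4 : (0:ℝ) ≤ ‖v x‖ := norm_nonneg _
    have h6 : (0:ℝ) ≤ ‖x‖ := norm_nonneg _
    rw [abs_mul, abs_mul]
    have hu : |u x| = ‖u x‖ := rfl
    have hv : |v x| = ‖v x‖ := rfl
    rw [hu, hv]
    nlinarith [mul_nonneg (mul_nonneg (sub_nonneg.2 this) h5) h4, mul_nonneg h5 h4]

lemma integrable_mul (u v : 𝓢N) : Integrable (fun x => u x * v x) := by
  apply integrable_master u v 1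
  · exact (u.continuous.mul v.continuous).aestronglyMeasurable
  · intro x
    rw [abs_mul]
    have hu : |u x| = ‖u x‖ := rfl
    have hv : |v x| = ‖v x‖ := rfl
    rw [hu, hv]
    have h5 : (0:ℝ) ≤ ‖u x‖ := norm_nonneg _
    have h4 : (0:ℝ) ≤ ‖v x‖ := norm_nonneg _
    have h6 : (0:ℝ) ≤ ‖x‖ := norm_nonneg _
    nlinarith [mul_nonneg (mul_nonneg h6 h5) h4]

/-- Plain integration by parts between two Schwartz maps. -/
lemma ibp_schwartz (u v : 𝓢N) (j : Fin N) :
    ∫ x, u x * (D j v) x = - ∫ x, (D j u) x * v x :=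
  integral_mul_fderiv_eq_neg_fderiv_mul_of_integrable (μ := volume)
      (f := ⇑u) (g := ⇑v) (v := EuclideanSpace.single j 1)
      (integrable_mul (D j u) v) (integrable_mul u (D j v)) (integrable_mul u v)
      (fun x _ => u.differentiableAt) (fun x _ => v.differentiableAt)

/-- Weighted integration by parts: `∫ xⱼ ∂ⱼg = -∫ g`. -/
lemma ibp_coord (j : Fin N) (g : EuclideanSpace ℝ (Fin N) → ℝ) (hg : Differentiable ℝ g)
    (i1 : Integrable (fun x => x j * g x))
    (i2 : Integrable g)
    (i3 : Integrable (fun x => x j * fderiv ℝ g x (EuclideanSpace.single j 1))) :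
    ∫ x, x j * fderiv ℝ g x (EuclideanSpace.single j 1) = - ∫ x, g x := by
  have hco : Differentiable ℝ (fun x : EuclideanSpace ℝ (Fin N) => x j) :=
    fun x => ((EuclideanSpace.proj (𝕜 := ℝ) j).hasFDerivAt (x := x)).differentiableAt
  have hfd : ∀ x : EuclideanSpace ℝ (Fin N),
      fderiv ℝ (fun y : EuclideanSpace ℝ (Fin N) => y j) x (EuclideanSpace.single j 1) = 1 := by
    intro x
    have h : HasFDerivAt (fun y : EuclideanSpace ℝ (Fin N) => y j)
        (EuclideanSpace.proj (𝕜 := ℝ) j) x := (EuclideanSpace.proj (𝕜 := ℝ) j).hasFDerivAt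
    rw [h.fderiv]
    simp [EuclideanSpace.single_apply]
  have hkey : (fun x : EuclideanSpace ℝ (Fin N) =>
      fderiv ℝ (fun y : EuclideanSpace ℝ (Fin N) => y j) x (EuclideanSpace.single j 1) * g x)
      = g := by
    funext x; rw [hfd, one_mul]
  have h := integral_mul_fderiv_eq_neg_fderiv_mul_of_integrable (μ := volume)
      (f := fun x : EuclideanSpace ℝ (Fin N) => x j) (g := g)
      (v := EuclideanSpace.single j 1) (by rw [hkey]; exact i2) i3 i1 (fun x _ => hco x) (fun x _ => hg x)
  rw [h, hkey]

/-- Symmetry of second derivatives for Schwartz maps. -/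
lemma D_comm (u : 𝓢N) (i j : Fin N) : D i (D j u) = D j (D i u) := by
  ext x
  have hu : ∀ y, HasFDerivAt (⇑u) (fderiv ℝ (⇑u) y) y := fun y => u.differentiableAt.hasFDerivAt
  have hc : ContDiff ℝ 1 (fderiv ℝ (⇑u)) := (u.smooth 2).fderiv_right (by norm_num)
  have hx : HasFDerivAt (fderiv ℝ (⇑u)) (fderiv ℝ (fderiv ℝ (⇑u)) x) x :=
    ((hc.differentiable one_ne_zero) x).hasFDerivAt
  have key : ∀ v w : EuclideanSpace ℝ (Fin N),
      fderiv ℝ (fun y => fderiv ℝ (⇑u) y w) x v = fderiv ℝ (fderiv ℝ (⇑u)) x v w := by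
    intro v w
    have hcomp : HasFDerivAt (fun y => fderiv ℝ (⇑u) y w)
        ((ContinuousLinearMap.apply ℝ ℝ w).comp (fderiv ℝ (fderiv ℝ (⇑u)) x)) x :=
      (ContinuousLinearMap.apply ℝ ℝ w).hasFDerivAt.comp x hx
    rw [hcomp.fderiv]
    rfl
  have hsym := second_derivative_symmetric hu hx (EuclideanSpace.single i 1)
    (EuclideanSpace.single j 1)
  show fderiv ℝ (⇑(D j u)) x (EuclideanSpace.single i 1)
      = fderiv ℝ (⇑(D i u)) x (EuclideanSpace.single j 1)
  have hDj : ⇑(D j u) = fun y => fderiv ℝ (⇑u) y (EuclideanSpace.single j 1) := rfl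
  have hDi : ⇑(D i u) = fun y => fderiv ℝ (⇑u) y (EuclideanSpace.single i 1) := rfl
  rw [hDj, hDi, key, key]
  exact hsym

/-- `d/dt |t|^(p+1) = (p+1) |t|^(p-1) t`. -/
lemma hasDerivAt_abs_rpow {p : ℝ} (hp : 1 < p) (t : ℝ) :
    HasDerivAt (fun t : ℝ => |t| ^ (p+1)) ((p+1) * |t| ^ (p-1) * t) t := by
  have habs : ∀ (s q : ℝ), 0 ≤ q → (s^2 : ℝ) ^ (q/2) = |s| ^ q := by
    intro s q hq
    rw [← sq_abs, ← Real.rpow_natCast |s| 2, ← Real.rpow_mul (abs_nonneg s)]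
    norm_num
    congr 1
    ring
  have h1 : HasDerivAt (fun s : ℝ => s ^ ((p+1)/2))
      (((p+1)/2) * (t^2) ^ ((p+1)/2 - 1)) (t^2) :=
    Real.hasDerivAt_rpow_const (Or.inr (by linarith))
  have h2 : HasDerivAt (fun t : ℝ => t^2) (2*t) t := by
    simpa using hasDerivAt_pow 2 t
  have h3 : HasDerivAt ((fun s : ℝ => s ^ ((p+1)/2)) ∘ (fun t : ℝ => t^2))
      (((p+1)/2) * (t^2) ^ ((p+1)/2 - 1) * (2*t)) t := HasDerivAt.comp (h := fun s : ℝ => s^2) t h1 h2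
  rw [Function.comp_def] at h3
  have hfun : (fun t : ℝ => (t^2 : ℝ) ^ ((p+1)/2)) = fun t : ℝ => |t| ^ (p+1) := by
    funext s; exact habs s (p+1) (by linarith)
  rw [hfun] at h3
  convert h3 using 1
  have : (p+1)/2 - 1 = (p-1)/2 := by ring
  rw [this, habs t (p-1) (by linarith)]
  ring

lemma abs_rpow_mul_sq {p : ℝ} (hp : 1 < p) (q : ℝ) :
    |q| ^ (p-1) * q * q = |q| ^ (p+1) := by
  rcases eq_or_ne q 0 with rfl | hq
  · rw [abs_zero, Real.zero_rpow (by linarith), Real.zero_rpow (by linarith)]; ring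
  · have h : q * q = |q| * |q| := (abs_mul_abs_self q).symm
    have hq' : 0 < |q| := abs_pos.2 hq
    have key : |q| ^ (p+1) = |q|^(p-1) * |q| * |q| := by
      rw [show p+1 = (p-1)+1+1 by ring, Real.rpow_add hq', Real.rpow_add hq', Real.rpow_one]
    rw [mul_assoc, h, ← mul_assoc, key]

lemma wt_self (u : 𝓢N) (j : Fin N) :
    ∫ x, x j * ((D j u) x * u x) = -(1/2) * ∫ x, u x * u x := by
  set g : EuclideanSpace ℝ (Fin N) → ℝ := fun x => u x * u x with hgdef
  have hm : ∀ x, HasFDerivAt g (u x • fderiv ℝ (⇑u) x + u x • fderiv ℝ (⇑u) x) x :=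
    fun x => (u.differentiableAt.hasFDerivAt).mul (u.differentiableAt.hasFDerivAt)
  have hfd : ∀ x, fderiv ℝ g x (EuclideanSpace.single j 1) = 2 * ((D j u) x * u x) := by
    intro x
    rw [(hm x).fderiv]
    simp only [ContinuousLinearMap.add_apply, ContinuousLinearMap.smul_apply, smul_eq_mul,
      D_apply]
    ring
  have hg : Differentiable ℝ g := u.differentiable.mul u.differentiable
  have i1 : Integrable (fun x => x j * g x) := by
    have := integrable_coord_mul u u j
    apply this.congr
    filter_upwards with x
    simp only [hgdef]; ring
  have i2 : Integrable g := integrable_mul u u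
  have i3 : Integrable (fun x => x j * fderiv ℝ g x (EuclideanSpace.single j 1)) := by
    have h2 : Integrable (fun x => 2 * (x j * (D j u) x * u x)) :=
      (integrable_coord_mul (D j u) u j).const_mul 2
    apply h2.congr
    filter_upwards with x
    rw [hfd x]; ring
  have h := ibp_coord j g hg i1 i2 i3
  have hL : (∫ x, x j * fderiv ℝ g x (EuclideanSpace.single j 1))
      = 2 * ∫ x, x j * ((D j u) x * u x) := by
    rw [← MeasureTheory.integral_const_mul]
    congr 1
    funext x
    rw [hfd x]; ring
  rw [hL] at h
  linarith [h]

/-- Weighted IBP against the nonlinearity. -/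
lemma wt_nonlin {p : ℝ} (hp : 1 < p) (Q : 𝓢N) (j : Fin N) :
    ∫ x, x j * ((D j Q) x * (|Q x| ^ (p-1) * Q x))
      = -(1/(p+1)) * ∫ x, |Q x| ^ (p+1) := by
  set M : ℝ := (SchwartzMap.seminorm ℝ 0 0) Q with hMdef
  have hM : ∀ x, |Q x| ≤ M := fun x => SchwartzMap.norm_le_seminorm ℝ Q x
  have hM0 : 0 ≤ M := le_trans (abs_nonneg _) (hM 0)
  have hMp : ∀ x : EuclideanSpace ℝ (Fin N), |Q x| ^ (p-1) ≤ M ^ (p-1) :=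
    fun x => Real.rpow_le_rpow (abs_nonneg _) (hM x) (by linarith)
  have hrpow_nonneg : ∀ x : EuclideanSpace ℝ (Fin N), (0:ℝ) ≤ |Q x| ^ (p-1) :=
    fun x => Real.rpow_nonneg (abs_nonneg _) _
  set g : EuclideanSpace ℝ (Fin N) → ℝ := fun x => |Q x| ^ (p+1) with hgdef
  have hgcont : Continuous g :=
    (Q.continuous.abs).rpow_const (fun x => Or.inr (by linarith))
  have hm : ∀ x, HasFDerivAt g (((p+1) * |Q x| ^ (p-1) * Q x) • fderiv ℝ (⇑Q) x) x :=
    fun x => (hasDerivAt_abs_rpow hp (Q x)).comp_hasFDerivAt x Q.differentiableAt.hasFDerivAt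
  have hfd : ∀ x, fderiv ℝ g x (EuclideanSpace.single j 1)
      = (p+1) * (|Q x| ^ (p-1) * Q x * (D j Q) x) := by
    intro x
    rw [(hm x).fderiv]
    simp only [ContinuousLinearMap.smul_apply, smul_eq_mul, D_apply]
    ring
  have hg : Differentiable ℝ g := fun x => (hm x).differentiableAt
  have hQn : ∀ x : EuclideanSpace ℝ (Fin N), ‖Q x‖ = |Q x| := fun x => rfl
  have habsg : ∀ x, |g x| = |Q x| ^ (p-1) * (|Q x| * |Q x|) := by
    intro x
    have h1 : (0:ℝ) ≤ g x := Real.rpow_nonneg (abs_nonneg _) _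
    rw [abs_of_nonneg h1]
    show |Q x| ^ (p+1) = _
    have h2 : |Q x| ^ (p+1) = |Q x| ^ (p-1) * Q x * Q x := (abs_rpow_mul_sq hp (Q x)).symm
    rw [h2, mul_assoc]
    congr 1
    exact (abs_mul_abs_self (Q x)).symm
  have i2 : Integrable g := by
    apply integrable_master Q Q (M ^ (p-1)) g hgcont.aestronglyMeasurable
    intro x
    rw [habsg x]
    have h6 : (0:ℝ) ≤ ‖x‖ := norm_nonneg x
    have h5 : (0:ℝ) ≤ |Q x| := abs_nonneg _
    have h9 := hMp x
    have h10 := hrpow_nonneg x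
    simp only [hQn]
    nlinarith [Real.rpow_nonneg hM0 (p-1), mul_nonneg (mul_nonneg h5 h5) h10,
      mul_nonneg h5 h5, mul_nonneg (mul_nonneg h6 (Real.rpow_nonneg hM0 (p-1))) (mul_nonneg h5 h5),
      mul_nonneg (mul_nonneg h5 h5) (sub_nonneg.2 h9)]
  have i1 : Integrable (fun x => x j * g x) := by
    have hc : Continuous (fun x : EuclideanSpace ℝ (Fin N) => x j * g x) :=
      ((EuclideanSpace.proj (𝕜 := ℝ) j).continuous).mul hgcont
    apply integrable_master Q Q (M ^ (p-1)) (fun x => x j * g x) hc.aestronglyMeasurable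
    intro x
    rw [abs_mul, habsg x]
    have h6 : (0:ℝ) ≤ ‖x‖ := norm_nonneg x
    have h5 : (0:ℝ) ≤ |Q x| := abs_nonneg _
    have h7 := abs_coord_le x j
    have h8 := abs_nonneg (x j)
    have h9 := hMp x
    have h10 := hrpow_nonneg x
    simp only [hQn]
    nlinarith [Real.rpow_nonneg hM0 (p-1), mul_nonneg (mul_nonneg h5 h5) h10,
      mul_nonneg h5 h5, mul_nonneg (mul_nonneg (sub_nonneg.2 h7) h10) (mul_nonneg h5 h5),
      mul_nonneg (mul_nonneg h8 (sub_nonneg.2 h9)) (mul_nonneg h5 h5),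
      mul_nonneg (mul_nonneg (sub_nonneg.2 h7) (Real.rpow_nonneg hM0 (p-1))) (mul_nonneg h5 h5)]
  have hfun : (fun x => x j * fderiv ℝ g x (EuclideanSpace.single j 1))
      = fun x => x j * ((p+1) * (|Q x| ^ (p-1) * Q x * (D j Q) x)) :=
    funext fun x => by rw [hfd x]
  have i3 : Integrable (fun x => x j * fderiv ℝ g x (EuclideanSpace.single j 1)) := by
    rw [hfun]
    apply integrable_master Q (D j Q) ((p+1) * M ^ (p-1)) _
      (Continuous.aestronglyMeasurable
        (((EuclideanSpace.proj (𝕜 := ℝ) j).continuous).mul (continuous_const.mul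
          ((((Q.continuous.abs).rpow_const (fun x => Or.inr (by linarith))).mul
            Q.continuous).mul (D j Q).continuous))))
    intro x
    have h6 : (0:ℝ) ≤ ‖x‖ := norm_nonneg x
    have h5 : (0:ℝ) ≤ |Q x| := abs_nonneg _
    have h7 := abs_coord_le x j
    have h8 := abs_nonneg (x j)
    have h9 := hMp x
    have h10 := hrpow_nonneg x
    have h11 : (0:ℝ) ≤ |(D j Q) x| := abs_nonneg _
    have h12 : (0:ℝ) ≤ M ^ (p-1) := Real.rpow_nonneg hM0 _
    have hp0 : (0:ℝ) < p + 1 := by linarith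
    calc |x j * ((p+1) * (|Q x| ^ (p-1) * Q x * (D j Q) x))|
        = |x j| * ((p+1) * (|Q x| ^ (p-1) * (|Q x| * |(D j Q) x|))) := by
          rw [abs_mul, abs_mul, abs_of_nonneg hp0.le, abs_mul, abs_mul,
            abs_of_nonneg (hrpow_nonneg x)]
          ring
      _ ≤ ((p+1) * M ^ (p-1)) * ((1 + ‖x‖) * (‖Q x‖ * ‖(D j Q) x‖)) := by
          simp only [hQn]
          have hDn : ‖(D j Q) x‖ = |(D j Q) x| := rfl
          rw [hDn]
          nlinarith [mul_nonneg (mul_nonneg h12 h5) h11,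
            mul_nonneg (mul_nonneg (mul_nonneg h6 h12) h5) h11,
            mul_nonneg (mul_nonneg (mul_nonneg h8 (sub_nonneg.2 h9)) h5) h11,
            mul_nonneg (mul_nonneg (mul_nonneg (sub_nonneg.2 h7) h10) h5) h11,
            mul_nonneg (mul_nonneg (mul_nonneg (sub_nonneg.2 h7) h12) h5) h11]
  have h := ibp_coord j g hg i1 i2 i3
  have hL : (∫ x, x j * fderiv ℝ g x (EuclideanSpace.single j 1))
      = (p+1) * ∫ x, x j * ((D j Q) x * (|Q x| ^ (p-1) * Q x)) := by
    rw [← MeasureTheory.integral_const_mul]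
    congr 1
    funext x
    rw [hfd x]; ring
  rw [hL] at h
  have hp1 : p + 1 ≠ 0 := by linarith
  show _ = -(1/(p+1)) * ∫ x, g x
  rw [neg_eq_iff_eq_neg.mp h.symm]
  rw [neg_mul_neg, ← mul_assoc, one_div, inv_mul_cancel₀ hp1, one_mul]

/-- The multiplier `x·∇` applied formally: `wsum u x = ∑ j xⱼ uⱼ(x)`. -/
def wsum (u : Fin N → 𝓢N) : EuclideanSpace ℝ (Fin N) → ℝ := fun x => ∑ j, x j * (u j) x

lemma hasFDerivAt_wsum (u : Fin N → 𝓢N) (x : EuclideanSpace ℝ (Fin N)) :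
    HasFDerivAt (wsum u)
      (∑ j, (x j • fderiv ℝ (⇑(u j)) x + (u j) x • (EuclideanSpace.proj (𝕜 := ℝ) j))) x := by
  apply HasFDerivAt.fun_sum
  intro j _
  exact HasFDerivAt.mul ((EuclideanSpace.proj (𝕜 := ℝ) j).hasFDerivAt)
    (u j).differentiableAt.hasFDerivAt

lemma differentiable_wsum (u : Fin N → 𝓢N) : Differentiable ℝ (wsum u) :=
  fun x => (hasFDerivAt_wsum u x).differentiableAt

lemma wsum_fderiv_apply (u : Fin N → 𝓢N) (x : EuclideanSpace ℝ (Fin N)) (i : Fin N) :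
    fderiv ℝ (wsum u) x (EuclideanSpace.single i 1)
      = (u i) x + wsum (fun j => D i (u j)) x := by
  rw [(hasFDerivAt_wsum u x).fderiv, ContinuousLinearMap.sum_apply]
  have hproj : ∀ j : Fin N, (EuclideanSpace.proj (𝕜 := ℝ) j) (EuclideanSpace.single i (1:ℝ))
      = if j = i then 1 else 0 := by
    intro j; simp [EuclideanSpace.single_apply]
  simp only [ContinuousLinearMap.add_apply, ContinuousLinearMap.smul_apply, smul_eq_mul, hproj]
  rw [Finset.sum_add_distrib]
  have h2 : (∑ j : Fin N, (u j) x * if j = i then (1:ℝ) else 0) = (u i) x := by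
    simp [mul_ite, Finset.sum_ite_eq']
  rw [h2, add_comm]
  rfl

lemma wsum_mul_eq (u : Fin N → 𝓢N) (w : 𝓢N) (x : EuclideanSpace ℝ (Fin N)) :
    wsum u x * w x = ∑ j, x j * (u j) x * w x := by
  rw [wsum, Finset.sum_mul]

lemma integrable_wsum_mul (u : Fin N → 𝓢N) (w : 𝓢N) :
    Integrable (fun x => wsum u x * w x) := by
  have h : (fun x => wsum u x * w x) = fun x => ∑ j, x j * (u j) x * w x :=
    funext fun x => wsum_mul_eq u w x
  rw [h]
  exact integrable_finset_sum _ (fun j _ => integrable_coord_mul (u j) w j)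

lemma integral_wsum_mul (u : Fin N → 𝓢N) (w : 𝓢N) :
    ∫ x, wsum u x * w x = ∑ j, ∫ x, x j * ((u j) x * w x) := by
  have h : (fun x => wsum u x * w x) = fun x => ∑ j, x j * (u j) x * w x :=
    funext fun x => wsum_mul_eq u w x
  rw [h, integral_finset_sum _ (fun j _ => integrable_coord_mul (u j) w j)]
  exact Finset.sum_congr rfl (fun j _ => by congr 1; funext x; ring)

lemma DDD (Q : 𝓢N) (i j : Fin N) :
    D i (D i (D j Q)) = D j (D i (D i Q)) := by
  rw [show D i (D i (D j Q)) = D i (D j (D i Q)) from congrArg (D i) (D_comm Q i j),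
    D_comm (D i Q) i j]

/-- First integration by parts for the Pohozaev multiplier. -/
lemma ibp_M_step (u : Fin N → 𝓢N) (w : 𝓢N) (i : Fin N) :
    ∫ x, wsum u x * (D i w) x
      = - ∫ x, ((u i) x * w x + wsum (fun j => D i (u j)) x * w x) := by
  have key := integral_mul_fderiv_eq_neg_fderiv_mul_of_integrable (μ := volume)
      (f := wsum u) (g := ⇑w) (v := EuclideanSpace.single i 1)
      ?_ (integrable_wsum_mul u (D i w)) (integrable_wsum_mul u w)
      (fun x _ => differentiable_wsum u x) (fun x _ => w.differentiableAt)
  · show (∫ x, wsum u x * fderiv ℝ (⇑w) x (EuclideanSpace.single i 1))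
        = - ∫ x, ((u i) x * w x + wsum (fun j => D i (u j)) x * w x)
    rw [key]
    congr 1
    apply integral_congr_ae
    filter_upwards with x
    rw [wsum_fderiv_apply, add_mul]
  · -- Integrable (fun x => fderiv (wsum u) x e * w x)
    have h : (fun x => fderiv ℝ (wsum u) x (EuclideanSpace.single i 1) * w x)
        = fun x => (u i) x * w x + wsum (fun j => D i (u j)) x * w x := by
      funext x; rw [wsum_fderiv_apply, add_mul]
    rw [h]
    exact (integrable_mul (u i) w).add (integrable_wsum_mul _ w)

/-- Pohozaev computation for the bilaplacian term. -/
lemma T1 (Q : 𝓢N) :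
    ∫ x, wsum (fun j => D j Q) x * (lapS (lapS Q)) x
      = (2 - (N:ℝ)/2) * ∫ x, lapS Q x * lapS Q x := by
  set R := lapS Q with hR
  -- expand lapS (lapS Q) as a sum
  have hexp : ∀ x, wsum (fun j => D j Q) x * (lapS R) x
      = ∑ i, wsum (fun j => D j Q) x * (D i (D i R)) x := by
    intro x
    rw [lapS, sum_apply', Finset.mul_sum]
  have hsplit : ∫ x, wsum (fun j => D j Q) x * (lapS R) x
      = ∑ i, ∫ x, wsum (fun j => D j Q) x * (D i (D i R)) x := by
    rw [integral_congr_ae (ae_of_all _ hexp)]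
    exact integral_finset_sum _ (fun i _ => integrable_wsum_mul _ (D i (D i R)))
  -- per-i computation
  have hper : ∀ i : Fin N, ∫ x, wsum (fun j => D j Q) x * (D i (D i R)) x
      = 2 * (∫ x, (D i (D i Q)) x * R x) + ∫ x, wsum (fun j => D i (D i (D j Q))) x * R x := by
    intro i
    have step1 := ibp_M_step (fun j => D j Q) (D i R) i
    have step2 := ibp_M_step (fun j => D i (D j Q)) R i
    have step3 := ibp_schwartz (D i Q) R i   -- ∫ DiQ * (D i R) = -∫ DiDiQ * R
    -- split integrals
    have hsa : ∫ x, ((D i Q) x * (D i R) x + wsum (fun j => D i (D j Q)) x * (D i R) x)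
        = (∫ x, (D i Q) x * (D i R) x) + ∫ x, wsum (fun j => D i (D j Q)) x * (D i R) x :=
      integral_add (integrable_mul _ _) (integrable_wsum_mul _ _)
    have hsb : ∫ x, ((D i (D i Q)) x * R x + wsum (fun j => D i (D i (D j Q))) x * R x)
        = (∫ x, (D i (D i Q)) x * R x) + ∫ x, wsum (fun j => D i (D i (D j Q))) x * R x :=
      integral_add (integrable_mul _ _) (integrable_wsum_mul _ _)
    rw [step1, hsa, step3, step2, hsb]
    ring
  -- sum the two families
  have hsum1 : ∑ i : Fin N, ∫ x, (D i (D i Q)) x * R x = ∫ x, R x * R x := by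
    rw [← integral_finset_sum _ (fun i _ => integrable_mul (D i (D i Q)) R)]
    apply integral_congr_ae
    filter_upwards with x
    rw [← Finset.sum_mul, hR]
    congr 1
    rw [lapS, sum_apply']
  have hsum2 : ∑ i : Fin N, ∫ x, wsum (fun j => D i (D i (D j Q))) x * R x
      = -((N:ℝ)/2) * ∫ x, R x * R x := by
    have hswap : ∀ i : Fin N, ∫ x, wsum (fun j => D i (D i (D j Q))) x * R x
        = ∑ j, ∫ x, x j * ((D i (D i (D j Q))) x * R x) :=
      fun i => integral_wsum_mul _ R
    rw [Finset.sum_congr rfl (fun i _ => hswap i), Finset.sum_comm]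
    have hj : ∀ j : Fin N, ∑ i : Fin N, ∫ x, x j * ((D i (D i (D j Q))) x * R x)
        = -(1/2) * ∫ x, R x * R x := by
      intro j
      have hcollect : ∑ i : Fin N, ∫ x, x j * ((D i (D i (D j Q))) x * R x)
          = ∫ x, x j * ((D j R) x * R x) := by
        rw [← integral_finset_sum]
        · apply integral_congr_ae
          filter_upwards with x
          rw [← Finset.mul_sum]
          congr 1
          rw [← Finset.sum_mul]
          congr 1
          calc ∑ i : Fin N, (D i (D i (D j Q))) x
              = ∑ i : Fin N, (D j (D i (D i Q))) x :=
                Finset.sum_congr rfl (fun i _ => by rw [DDD])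
            _ = (∑ i : Fin N, D j (D i (D i Q))) x := (sum_apply' _ _ x).symm
            _ = (D j (∑ i : Fin N, D i (D i Q))) x := by rw [map_sum]
            _ = (D j R) x := rfl
        · intro i _
          have := integrable_coord_mul (D i (D i (D j Q))) R j
          apply this.congr
          filter_upwards with x
          ring
      rw [hcollect, wt_self R j]
    rw [Finset.sum_congr rfl (fun j _ => hj j), Finset.sum_const, Finset.card_univ,
      Fintype.card_fin, nsmul_eq_mul]
    ring
  rw [hsplit, Finset.sum_congr rfl (fun i _ => hper i), Finset.sum_add_distrib,
    ← Finset.mul_sum, hsum1, hsum2]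
  ring


lemma integrable_rpow {p : ℝ} (hp : 1 < p) (Q : 𝓢N) :
    Integrable (fun x => |Q x| ^ (p+1)) := by
  set M : ℝ := (SchwartzMap.seminorm ℝ 0 0) Q with hMdef
  have hM : ∀ x, |Q x| ≤ M := fun x => SchwartzMap.norm_le_seminorm ℝ Q x
  have hM0 : 0 ≤ M := le_trans (abs_nonneg _) (hM 0)
  have hMp : ∀ x : EuclideanSpace ℝ (Fin N), |Q x| ^ (p-1) ≤ M ^ (p-1) :=
    fun x => Real.rpow_le_rpow (abs_nonneg _) (hM x) (by linarith)
  have hrpow_nonneg : ∀ x : EuclideanSpace ℝ (Fin N), (0:ℝ) ≤ |Q x| ^ (p-1) :=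
    fun x => Real.rpow_nonneg (abs_nonneg _) _
  have hgcont : Continuous (fun x : EuclideanSpace ℝ (Fin N) => |Q x| ^ (p+1)) :=
    (Q.continuous.abs).rpow_const (fun x => Or.inr (by linarith))
  have hQn : ∀ x : EuclideanSpace ℝ (Fin N), ‖Q x‖ = |Q x| := fun x => rfl
  apply integrable_master Q Q (M ^ (p-1)) _ hgcont.aestronglyMeasurable
  intro x
  have h1 : (0:ℝ) ≤ |Q x| ^ (p+1) := Real.rpow_nonneg (abs_nonneg _) _
  have h2 : |Q x| ^ (p+1) = |Q x| ^ (p-1) * Q x * Q x := (abs_rpow_mul_sq hp (Q x)).symm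
  have h3 : Q x * Q x = |Q x| * |Q x| := (abs_mul_abs_self (Q x)).symm
  rw [abs_of_nonneg h1, h2, mul_assoc, h3]
  have h6 : (0:ℝ) ≤ ‖x‖ := norm_nonneg x
  have h5 : (0:ℝ) ≤ |Q x| := abs_nonneg _
  have h9 := hMp x
  have h10 := hrpow_nonneg x
  simp only [hQn]
  nlinarith [Real.rpow_nonneg hM0 (p-1), mul_nonneg (mul_nonneg h5 h5) h10,
    mul_nonneg h5 h5, mul_nonneg (mul_nonneg h6 (Real.rpow_nonneg hM0 (p-1))) (mul_nonneg h5 h5),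
    mul_nonneg (mul_nonneg h5 h5) (sub_nonneg.2 h9)]

lemma integrable_coord_nonlin {p : ℝ} (hp : 1 < p) (Q v : 𝓢N) (j : Fin N) :
    Integrable (fun x => x j * (v x * (|Q x| ^ (p-1) * Q x))) := by
  set M : ℝ := (SchwartzMap.seminorm ℝ 0 0) Q with hMdef
  have hM : ∀ x, |Q x| ≤ M := fun x => SchwartzMap.norm_le_seminorm ℝ Q x
  have hM0 : 0 ≤ M := le_trans (abs_nonneg _) (hM 0)
  have hMp : ∀ x : EuclideanSpace ℝ (Fin N), |Q x| ^ (p-1) ≤ M ^ (p-1) :=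
    fun x => Real.rpow_le_rpow (abs_nonneg _) (hM x) (by linarith)
  have hrpow_nonneg : ∀ x : EuclideanSpace ℝ (Fin N), (0:ℝ) ≤ |Q x| ^ (p-1) :=
    fun x => Real.rpow_nonneg (abs_nonneg _) _
  have hQn : ∀ x : EuclideanSpace ℝ (Fin N), ‖Q x‖ = |Q x| := fun x => rfl
  apply integrable_master v Q (M ^ (p-1)) _
    (Continuous.aestronglyMeasurable
      (((EuclideanSpace.proj (𝕜 := ℝ) j).continuous).mul (v.continuous.mul
        (((Q.continuous.abs).rpow_const (fun x => Or.inr (by linarith))).mul Q.continuous))))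
  intro x
  have h6 : (0:ℝ) ≤ ‖x‖ := norm_nonneg x
  have h5 : (0:ℝ) ≤ |Q x| := abs_nonneg _
  have h7 := abs_coord_le x j
  have h8 := abs_nonneg (x j)
  have h9 := hMp x
  have h10 := hrpow_nonneg x
  have h11 : (0:ℝ) ≤ |v x| := abs_nonneg _
  have h12 : (0:ℝ) ≤ M ^ (p-1) := Real.rpow_nonneg hM0 _
  calc |x j * (v x * (|Q x| ^ (p-1) * Q x))|
      = |x j| * (|v x| * (|Q x| ^ (p-1) * |Q x|)) := by
        rw [abs_mul, abs_mul, abs_mul, abs_of_nonneg (hrpow_nonneg x)]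
    _ ≤ (M ^ (p-1)) * ((1 + ‖x‖) * (‖v x‖ * ‖Q x‖)) := by
        simp only [hQn]
        have hvn : ‖v x‖ = |v x| := rfl
        rw [hvn]
        nlinarith [mul_nonneg (mul_nonneg h12 h11) h5,
          mul_nonneg (mul_nonneg (mul_nonneg h6 h12) h11) h5,
          mul_nonneg (mul_nonneg (mul_nonneg h8 (sub_nonneg.2 h9)) h11) h5,
          mul_nonneg (mul_nonneg (mul_nonneg (sub_nonneg.2 h7) h10) h11) h5,
          mul_nonneg (mul_nonneg (mul_nonneg (sub_nonneg.2 h7) h12) h11) h5]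

lemma eqA (Q : 𝓢N) : ∫ x, Q x * (lapS (lapS Q)) x = ∫ x, lapS Q x * lapS Q x := by
  set R := lapS Q with hR
  have hexp : ∀ x, Q x * (lapS R) x = ∑ i, Q x * (D i (D i R)) x := by
    intro x; rw [lapS, sum_apply', Finset.mul_sum]
  have hsplit : ∫ x, Q x * (lapS R) x = ∑ i, ∫ x, Q x * (D i (D i R)) x := by
    rw [integral_congr_ae (ae_of_all _ hexp)]
    exact integral_finset_sum _ (fun i _ => integrable_mul Q (D i (D i R)))
  have hper : ∀ i : Fin N, ∫ x, Q x * (D i (D i R)) x = ∫ x, (D i (D i Q)) x * R x := by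
    intro i
    rw [ibp_schwartz Q (D i R) i, ibp_schwartz (D i Q) R i, neg_neg]
  have hsum1 : ∑ i : Fin N, ∫ x, (D i (D i Q)) x * R x = ∫ x, R x * R x := by
    rw [← integral_finset_sum _ (fun i _ => integrable_mul (D i (D i Q)) R)]
    apply integral_congr_ae
    filter_upwards with x
    rw [← Finset.sum_mul, hR]
    congr 1
    rw [lapS, sum_apply']
  rw [hsplit, Finset.sum_congr rfl (fun i _ => hper i), hsum1]

end GSI

open GSI

/-- For the ground state `Q` of `Δ²Q + (2 - s_c)Q - |Q|^{p-1}Q = 0`: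
`∫|ΔQ|² = (N(p-1)/(4(p+1)))∫|Q|^{p+1}`, `∫|Q|² = ((p-1)/(2(p+1)))∫|Q|^{p+1}`, and
`E(Q) = ((N(p-1)-8)/(8(p+1)))∫|Q|^{p+1}`. -/
theorem ground_state_identities (N : ℕ) (hN : 1 ≤ N) (p : ℝ)
    (hp1 : 1 + 8 / (N : ℝ) < p) (hp2 : 5 ≤ N → p < 1 + 8 / ((N : ℝ) - 4))
    (s_c : ℝ) (hs : s_c = (N : ℝ) / 2 - 4 / (p - 1))
    (Q : SchwartzMap (EuclideanSpace ℝ (Fin N)) ℝ)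
    (hQ : ∀ x, laplacian (laplacian (⇑Q)) x + (2 - s_c) * Q x - |Q x| ^ (p - 1) * Q x = 0) :
    (∫ x, |laplacian (⇑Q) x| ^ 2)
        = ((N : ℝ) * (p - 1) / (4 * (p + 1))) * ∫ x, |Q x| ^ (p + 1) ∧
    (∫ x, |Q x| ^ 2) = ((p - 1) / (2 * (p + 1))) * ∫ x, |Q x| ^ (p + 1) ∧
    (1 / 2) * (∫ x, |laplacian (⇑Q) x| ^ 2) - (1 / (p + 1)) * (∫ x, |Q x| ^ (p + 1))
        = (((N : ℝ) * (p - 1) - 8) / (8 * (p + 1))) * ∫ x, |Q x| ^ (p + 1) := by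
  classical
  have hN0 : (0:ℝ) < (N:ℝ) := by exact_mod_cast hN
  have hp : 1 < p := by
    have h8 : (0:ℝ) < 8 / (N:ℝ) := by positivity
    linarith
  have hp1' : (0:ℝ) < p - 1 := by linarith
  have hpp1 : (0:ℝ) < p + 1 := by linarith
  have hpne : p + 1 ≠ 0 := ne_of_gt hpp1
  have hpne' : p - 1 ≠ 0 := ne_of_gt hp1'
  set np : ℝ := (N:ℝ) with hnp
  set c : ℝ := 2 - s_c with hc
  have hcpos : 0 < c := by
    rcases le_or_gt 5 N with h5 | h5
    · have h5' := hp2 h5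
      have hN4 : (0:ℝ) < (N:ℝ) - 4 := by
        have h5r : (5:ℝ) ≤ (N:ℝ) := by exact_mod_cast h5
        linarith
      have h8 : p - 1 < 8 / ((N:ℝ) - 4) := by linarith
      have h8' : (p - 1) * ((N:ℝ) - 4) < 8 := (lt_div_iff₀ hN4).1 h8
      have h4 : ((N:ℝ) - 4)/2 < 4/(p-1) := by
        rw [div_lt_div_iff₀ (by norm_num) hp1']
        nlinarith
      rw [hc, hs]
      simp only [hnp] at *
      linarith
    · have hN4 : (N:ℝ) ≤ 4 := by
        have : N ≤ 4 := by omega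
        exact_mod_cast this
      have h4 : 0 < 4/(p-1) := by positivity
      rw [hc, hs]
      linarith
  have hcne : c ≠ 0 := ne_of_gt hcpos
  -- rewrite the equation in terms of Schwartz maps
  have hlap2 : laplacian (laplacian ⇑Q) = ⇑(lapS (lapS Q)) := by
    rw [← lapS_coe Q, ← lapS_coe (lapS Q)]
  have heq : ∀ x, (lapS (lapS Q)) x = |Q x| ^ (p-1) * Q x - c * Q x := by
    intro x
    have h := hQ x
    rw [hlap2] at h
    linarith
  set R := lapS Q with hR
  set A := ∫ x, R x * R x with hA
  set B := ∫ x, Q x * Q x with hB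
  set C := ∫ x, |Q x| ^ (p+1) with hC
  have hCint : Integrable (fun x => |Q x| ^ (p+1)) := integrable_rpow hp Q
  -- first identity (multiply the equation by Q)
  have hQnl : ∀ x, Q x * ((lapS (lapS Q)) x) = |Q x| ^ (p+1) - c * (Q x * Q x) := by
    intro x
    rw [heq x]
    linear_combination abs_rpow_mul_sq hp (Q x)
  have hE1 : A = C - c * B := by
    have h1 : ∫ x, Q x * (lapS (lapS Q)) x = A := eqA Q
    have h2 : ∫ x, Q x * (lapS (lapS Q)) x = C - c * B := by
      have hptw : (fun x => Q x * (lapS (lapS Q)) x)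
          = fun x => |Q x| ^ (p+1) - c * (Q x * Q x) := funext hQnl
      rw [hptw, integral_sub hCint ((integrable_mul Q Q).const_mul c),
        MeasureTheory.integral_const_mul]
    rw [← h1, h2]
  -- Pohozaev identity (multiply the equation by x·∇Q)
  have hMlap : ∫ x, wsum (fun j => D j Q) x * (lapS (lapS Q)) x = (2 - np/2) * A := T1 Q
  have hMQ : ∫ x, wsum (fun j => D j Q) x * Q x = -(np/2) * B := by
    rw [integral_wsum_mul, Finset.sum_congr rfl (fun j _ => wt_self Q j),
      Finset.sum_const, Finset.card_univ, Fintype.card_fin, nsmul_eq_mul]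
    ring
  have hMnl_int : Integrable (fun x => wsum (fun j => D j Q) x * (|Q x| ^ (p-1) * Q x)) := by
    have h : (fun x => wsum (fun j => D j Q) x * (|Q x| ^ (p-1) * Q x))
        = fun x => ∑ j, x j * ((D j Q) x * (|Q x| ^ (p-1) * Q x)) := by
      funext x
      rw [wsum, Finset.sum_mul]
      exact Finset.sum_congr rfl (fun j _ => by ring)
    rw [h]
    exact integrable_finset_sum _ (fun j _ => integrable_coord_nonlin hp Q (D j Q) j)
  have hMnl : ∫ x, wsum (fun j => D j Q) x * (|Q x| ^ (p-1) * Q x) = -(np/(p+1)) * C := by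
    have h : (fun x => wsum (fun j => D j Q) x * (|Q x| ^ (p-1) * Q x))
        = fun x => ∑ j, x j * ((D j Q) x * (|Q x| ^ (p-1) * Q x)) := by
      funext x
      rw [wsum, Finset.sum_mul]
      exact Finset.sum_congr rfl (fun j _ => by ring)
    rw [h, integral_finset_sum _ (fun j _ => integrable_coord_nonlin hp Q (D j Q) j),
      Finset.sum_congr rfl (fun j _ => wt_nonlin hp Q j),
      Finset.sum_const, Finset.card_univ, Fintype.card_fin, nsmul_eq_mul]
    ring
  have hE2 : (2 - np/2) * A = -(np/(p+1)) * C + c * ((np/2) * B) := by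
    have hsplit : ∫ x, wsum (fun j => D j Q) x * (lapS (lapS Q)) x
        = (∫ x, wsum (fun j => D j Q) x * (|Q x| ^ (p-1) * Q x))
          - c * ∫ x, wsum (fun j => D j Q) x * Q x := by
      have hptw : (fun x => wsum (fun j => D j Q) x * (lapS (lapS Q)) x)
          = fun x => wsum (fun j => D j Q) x * (|Q x| ^ (p-1) * Q x)
              - c * (wsum (fun j => D j Q) x * Q x) := by
        funext x
        rw [heq x]
        ring
      rw [hptw, integral_sub hMnl_int (((integrable_wsum_mul (fun j => D j Q) Q)).const_mul c),
        MeasureTheory.integral_const_mul]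
    rw [hsplit, hMnl, hMQ] at hMlap
    linear_combination -hMlap
  -- solve the linear system
  have hcomb : 2 * A = (np/2 - np/(p+1)) * C := by
    linear_combination hE2 + (np/2) * hE1
  have hfrac : np/2 - np/(p+1) = np*(p-1)/(2*(p+1)) := by
    field_simp
    ring
  have hApC : A = np*(p-1)/(4*(p+1)) * C := by
    rw [hfrac] at hcomb
    have h2 : np*(p-1)/(2*(p+1)) = 2 * (np*(p-1)/(4*(p+1))) := by
      field_simp
      ring
    rw [h2] at hcomb
    linarith
  have hBkey : c * ((p-1)/(2*(p+1))) = 1 - np*(p-1)/(4*(p+1)) := by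
    rw [hc, hs, hnp]
    field_simp
    ring
  have hBpC : B = (p-1)/(2*(p+1)) * C := by
    have h1 : c * B = C - A := by linarith
    have h2 : c * ((p-1)/(2*(p+1)) * C) = C - A := by
      rw [hApC, ← mul_assoc, hBkey]
      ring
    have := h1.trans h2.symm
    exact mul_left_cancel₀ hcne this
  -- translate back to the goal
  have hAg : (∫ x, |laplacian (⇑Q) x| ^ 2) = A := by
    rw [← lapS_coe Q]
    rw [hA]
    apply integral_congr_ae
    filter_upwards with x
    rw [sq_abs, pow_two]
  have hBg : (∫ x, |Q x| ^ 2) = B := by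
    rw [hB]
    apply integral_congr_ae
    filter_upwards with x
    rw [sq_abs, pow_two]
  have hfinal : (1/2) * A - (1/(p+1)) * C = (np*(p-1) - 8)/(8*(p+1)) * C := by
    rw [hApC]
    have hsc : (1/2) * (np*(p-1)/(4*(p+1))) - 1/(p+1) = (np*(p-1) - 8)/(8*(p+1)) := by
      field_simp
      ring
    linear_combination C * hsc
  refine ⟨?_, ?_, ?_⟩
  · rw [hAg]
    rw [show ((N:ℝ) * (p - 1) / (4 * (p + 1))) = np*(p-1)/(4*(p+1)) from rfl]
    exact hApC
  · rw [hBg]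
    exact hBpC
  · rw [hAg]
    exact hfinal
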